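/- Let α ∈ (0,1), let H be a real Hilbert space, and let v : [0,T] → H be continuously differentiable. Then (v(t), D_t^α v(t))_H ≥ (1/2) D_t^α |v(t)|_H² for all t ∈ (0,T], where D_t^α denotes the Caputo fractional derivative. -/

import Mathlib

open MeasureTheory RealInnerProductSpace

/-- The left Caputo fractional derivative of order `α ∈ (0,1)` of a scalar function. -/
noncomputable def caputoDeriv (α : ℝ) (w : ℝ → ℝ) (t : ℝ) : ℝ :=
  (Real.Gamma (1 - α))⁻¹ * ∫ s in (0:ℝ)..t, (t - s) ^ (-α) * deriv w s

/-- The left Caputo fractional derivative of order `α ∈ (0,1)` of an `H`-valued function. -/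
noncomputable def caputoDerivVec {H : Type*} [NormedAddCommGroup H] [NormedSpace ℝ H]
    (α : ℝ) (v : ℝ → H) (t : ℝ) : H :=
  (Real.Gamma (1 - α))⁻¹ • ∫ s in (0:ℝ)..t, (t - s) ^ (-α) • deriv v s

section Aux

open Set intervalIntegral Filter Topology


lemma caputo_key_aux {α t : ℝ} (hα0 : 0 < α) (hα1 : α < 1) (ht : 0 < t)
    {w g : ℝ → ℝ}
    (hwc : ContinuousOn w (Icc 0 t))
    (hgc : ContinuousOn g (Icc 0 t))
    (hder : ∀ s ∈ Ioo 0 t, HasDerivAt w (g s) s)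
    (hw0 : ∀ s ∈ Icc 0 t, 0 ≤ w s)
    (hwt : w t = 0) :
    (∫ s in (0:ℝ)..t, (t - s) ^ (-α) * g s) ≤ 0 := by
  obtain ⟨M, hM⟩ := isCompact_Icc.exists_bound_of_continuousOn hgc
  have hM0 : 0 ≤ M := le_trans (norm_nonneg _) (hM 0 ⟨le_refl 0, ht.le⟩)
  -- Lipschitz-type bound on w
  have hwle : ∀ b ∈ Icc (0:ℝ) t, w b ≤ M * (t - b) := by
    intro b hb
    have hgi : IntervalIntegrable g volume b t := by
      apply ContinuousOn.intervalIntegrable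
      rw [uIcc_of_le hb.2]
      exact hgc.mono (Icc_subset_Icc hb.1 le_rfl)
    have hftc : (∫ s in b..t, g s) = w t - w b :=
      integral_eq_sub_of_hasDeriv_right_of_le hb.2
        (hwc.mono (Icc_subset_Icc hb.1 le_rfl))
        (fun x hx => (hder x ⟨lt_of_le_of_lt hb.1 hx.1, hx.2⟩).hasDerivWithinAt) hgi
    have hbnd : ‖∫ s in b..t, g s‖ ≤ M * |t - b| := by
      apply intervalIntegral.norm_integral_le_of_norm_le_const
      intro x hx
      rw [uIoc_of_le hb.2] at hx
      exact hM x ⟨le_of_lt (lt_of_le_of_lt hb.1 hx.1), hx.2⟩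
    have hwb : w b = -(∫ s in b..t, g s) := by rw [hftc, hwt]; ring
    have h1 : -(∫ s in b..t, g s) ≤ ‖∫ s in b..t, g s‖ := by
      rw [Real.norm_eq_abs]; exact neg_le_abs _
    rw [hwb]
    calc -(∫ s in b..t, g s) ≤ M * |t - b| := le_trans h1 hbnd
      _ = M * (t - b) := by rw [abs_of_nonneg (by linarith [hb.2])]
  -- integrability of the full integrand
  have hbase : IntegrableOn (fun s => (t - s) ^ (-α)) (Ioc 0 t) := by
    have h1 : IntervalIntegrable (fun x : ℝ => x ^ (-α)) volume 0 t :=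
      intervalIntegral.intervalIntegrable_rpow' (by linarith)
    have h2 := h1.comp_sub_left t
    simp only [sub_zero, sub_self] at h2
    exact (intervalIntegrable_iff_integrableOn_Ioc_of_le ht.le).mp h2.symm
  have hint : IntegrableOn (fun s => (t - s) ^ (-α) * g s) (Ioc 0 t) := by
    have := hbase.bdd_mul (c := M)
      ((hgc.mono Ioc_subset_Icc_self).aestronglyMeasurable measurableSet_Ioc)
      (by filter_upwards [ae_restrict_mem measurableSet_Ioc] with x hx
          exact hM x (Ioc_subset_Icc_self hx))
    exact this.congr (Filter.Eventually.of_forall fun x => mul_comm _ _)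
  set f : ℝ → ℝ := fun s => (t - s) ^ (-α) * g s with hf
  have hfuIcc : IntegrableOn f (uIcc 0 t) := by
    rw [uIcc_of_le ht.le, integrableOn_Icc_iff_integrableOn_Ioc]
    exact hint
  set P : ℝ → ℝ := fun x => ∫ s in (0:ℝ)..x, f s with hP
  have hPc : ContinuousOn P (Icc 0 t) := by
    rw [← uIcc_of_le ht.le]
    exact continuousOn_primitive_interval hfuIcc
  have hfi : ∀ a b, 0 ≤ a → a ≤ b → b ≤ t → IntervalIntegrable f volume a b := by
    intro a b ha hab hbt
    rw [intervalIntegrable_iff_integrableOn_Ioc_of_le hab]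
    exact hint.mono_set (Ioc_subset_Ioc ha hbt)
  -- truncated integration by parts
  have hsub : ∀ a b, 0 < a → a ≤ b → b < t →
      (∫ s in a..b, f s) ≤ (t - b) ^ (-α) * w b := by
    intro a b ha hab hbt
    have hu : ∀ x ∈ uIcc a b, HasDerivAt (fun s => (t - s) ^ (-α))
        (α * (t - x) ^ (-α - 1)) x := by
      intro x hx
      rw [uIcc_of_le hab] at hx
      have htx : (0:ℝ) < t - x := by
        have := hx.2; linarith
      have h1 : HasDerivAt (fun s : ℝ => t - s) (-1) x := (hasDerivAt_id x).const_sub t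
      have h2 := h1.rpow_const (p := -α) (Or.inl htx.ne')
      convert h2 using 1
      ring
    have hv : ∀ x ∈ uIcc a b, HasDerivAt w (g x) x := by
      intro x hx
      rw [uIcc_of_le hab] at hx
      exact hder x ⟨lt_of_lt_of_le ha hx.1, lt_of_le_of_lt hx.2 hbt⟩
    have hu' : IntervalIntegrable (fun x => α * (t - x) ^ (-α - 1)) volume a b := by
      apply ContinuousOn.intervalIntegrable
      apply continuousOn_const.mul
      apply ContinuousOn.rpow_const
      · exact (continuousOn_const.sub continuousOn_id)
      · intro x hx
        rw [uIcc_of_le hab] at hx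
        left
        have := hx.2
        have : (0:ℝ) < t - x := by linarith
        exact this.ne'
    have hv' : IntervalIntegrable g volume a b := by
      apply ContinuousOn.intervalIntegrable
      rw [uIcc_of_le hab]
      exact hgc.mono (Icc_subset_Icc ha.le hbt.le)
    have hibp := intervalIntegral.integral_mul_deriv_eq_deriv_mul hu hv hu' hv'
    have hterm1 : 0 ≤ (t - a) ^ (-α) * w a :=
      mul_nonneg (Real.rpow_nonneg (by linarith) _) (hw0 a ⟨ha.le, by linarith⟩)
    have hterm2 : 0 ≤ ∫ x in a..b, α * (t - x) ^ (-α - 1) * w x := by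
      apply intervalIntegral.integral_nonneg hab
      intro x hx
      exact mul_nonneg (mul_nonneg hα0.le (Real.rpow_nonneg (by linarith [hx.2]) _))
        (hw0 x ⟨le_trans ha.le hx.1, le_trans hx.2 hbt.le⟩)
    rw [hf]
    rw [hibp]
    linarith
  -- step 1 : bound P b
  have hstep1 : ∀ b ∈ Ioo (0:ℝ) t, P b ≤ M * (t - b) ^ (1 - α) := by
    intro b hb
    have hCb : (t - b) ^ (-α) * w b ≤ M * (t - b) ^ (1 - α) := by
      have h1 : (t - b) ^ (-α) * w b ≤ (t - b) ^ (-α) * (M * (t - b)) := by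
        apply mul_le_mul_of_nonneg_left (hwle b ⟨hb.1.le, hb.2.le⟩)
          (Real.rpow_nonneg (by linarith [hb.2]) _)
      have h2 : (t - b) ^ (-α) * (M * (t - b)) = M * (t - b) ^ (1 - α) := by
        have htb : (0:ℝ) < t - b := by linarith [hb.2]
        rw [show (1 : ℝ) - α = -α + 1 by ring, Real.rpow_add htb, Real.rpow_one]
        ring
      linarith
    refine le_trans ?_ hCb
    -- P b ≤ (t-b)^(-α) * w b via a → 0⁺
    have hl : 𝓝[Ioo (0:ℝ) b] (0:ℝ) = 𝓝[>] (0:ℝ) := nhdsWithin_Ioo_eq_nhdsGT hb.1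
    have hne : (𝓝[Ioo (0:ℝ) b] (0:ℝ)).NeBot := by rw [hl]; infer_instance
    have hPa : Tendsto P (𝓝[Ioo (0:ℝ) b] (0:ℝ)) (𝓝 0) := by
      have h0 : P 0 = 0 := intervalIntegral.integral_same
      have := (hPc 0 ⟨le_refl 0, ht.le⟩).tendsto
      rw [h0] at this
      exact this.mono_left (nhdsWithin_mono _ (fun x hx => ⟨hx.1.le, le_trans hx.2.le hb.2.le⟩))
    have hev : ∀ᶠ a in 𝓝[Ioo (0:ℝ) b] (0:ℝ), P b - P a ≤ (t - b) ^ (-α) * w b := by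
      filter_upwards [self_mem_nhdsWithin] with a ha
      have hsplit : P a + ∫ s in a..b, f s = P b :=
        intervalIntegral.integral_add_adjacent_intervals
          (hfi 0 a le_rfl ha.1.le (le_trans ha.2.le hb.2.le))
          (hfi a b ha.1.le ha.2.le hb.2.le)
      have := hsub a b ha.1 ha.2.le hb.2
      linarith
    have htend : Tendsto (fun a => P b - P a) (𝓝[Ioo (0:ℝ) b] (0:ℝ)) (𝓝 (P b)) := by
      have := (tendsto_const_nhds (x := P b) (f := 𝓝[Ioo (0:ℝ) b] (0:ℝ))).sub hPa
      simpa using this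
    exact le_of_tendsto htend hev
  -- step 2 : b → t⁻
  have hPt : P t ≤ 0 := by
    have hl : 𝓝[Ioo (0:ℝ) t] t = 𝓝[<] t := nhdsWithin_Ioo_eq_nhdsLT ht
    have hne : (𝓝[Ioo (0:ℝ) t] t).NeBot := by rw [hl]; infer_instance
    have hPb : Tendsto P (𝓝[Ioo (0:ℝ) t] t) (𝓝 (P t)) :=
      ((hPc t ⟨ht.le, le_refl t⟩).tendsto).mono_left
        (nhdsWithin_mono _ (fun x hx => ⟨hx.1.le, hx.2.le⟩))
    have hRb : Tendsto (fun b => M * (t - b) ^ (1 - α)) (𝓝[Ioo (0:ℝ) t] t) (𝓝 0) := by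
      have h1 : Tendsto (fun b : ℝ => t - b) (𝓝[Ioo (0:ℝ) t] t) (𝓝 0) := by
        have h0 : Tendsto (fun b : ℝ => t - b) (𝓝 t) (𝓝 (t - t)) :=
          (continuous_const.sub continuous_id).tendsto t
        rw [sub_self] at h0
        exact h0.mono_left nhdsWithin_le_nhds
      have h2 : Tendsto (fun x : ℝ => x ^ (1 - α)) (𝓝 0) (𝓝 ((0:ℝ) ^ (1 - α))) :=
        (Real.continuousAt_rpow_const 0 (1 - α) (Or.inr (by linarith))).tendsto
      have h3 := (h2.comp h1).const_mul M
      rw [Real.zero_rpow (by linarith : (1:ℝ) - α ≠ 0)] at h3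
      simpa using h3
    refine le_of_tendsto_of_tendsto hPb hRb ?_
    filter_upwards [self_mem_nhdsWithin] with b hb
    exact hstep1 b hb
  exact hPt

open RealInnerProductSpace in
theorem inner_caputoDeriv_ge' {H : Type*} [NormedAddCommGroup H] [InnerProductSpace ℝ H]
    [CompleteSpace H]
    (α T : ℝ) (hα : α ∈ Set.Ioo (0:ℝ) 1) (hT : 0 < T)
    (v : ℝ → H) (hv : ContDiffOn ℝ 1 v (Set.Icc 0 T)) (t : ℝ) (ht : t ∈ Set.Ioc 0 T) :
    ⟪v t, (Real.Gamma (1 - α))⁻¹ • ∫ s in (0:ℝ)..t, (t - s) ^ (-α) • deriv v s⟫ ≥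
      (1 / 2) * ((Real.Gamma (1 - α))⁻¹ *
        ∫ s in (0:ℝ)..t, (t - s) ^ (-α) * deriv (fun s => ‖v s‖ ^ 2) s) := by
  obtain ⟨hα0, hα1⟩ := hα
  obtain ⟨ht0, htT⟩ := ht
  set K := Icc (0:ℝ) T with hK
  have hKu : UniqueDiffOn ℝ K := uniqueDiffOn_Icc hT
  set dv := derivWithin v K with hdv
  have hdvc : ContinuousOn dv K := hv.continuousOn_derivWithin hKu le_rfl
  have hvc : ContinuousOn v K := hv.continuousOn
  have hIooT : Ioo (0:ℝ) t ⊆ Ioo 0 T := fun s hs => ⟨hs.1, lt_of_lt_of_le hs.2 htT⟩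
  have hIocK : Ioc (0:ℝ) t ⊆ K := fun s hs => ⟨hs.1.le, le_trans hs.2 htT⟩
  have hIccK : Icc (0:ℝ) t ⊆ K := fun s hs => ⟨hs.1, le_trans hs.2 htT⟩
  have hderiv : ∀ s ∈ Ioo (0:ℝ) T, HasDerivAt v (dv s) s := by
    intro s hs
    have hKn : K ∈ 𝓝 s := Icc_mem_nhds hs.1 hs.2
    have hdiff : DifferentiableAt ℝ v s := (hv.contDiffAt hKn).differentiableAt one_ne_zero
    have heq : dv s = deriv v s := by rw [hdv, derivWithin_of_mem_nhds hKn]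
    rw [heq]
    exact hdiff.hasDerivAt
  obtain ⟨M, hM⟩ := isCompact_Icc.exists_bound_of_continuousOn hdvc
  have hM0 : 0 ≤ M := le_trans (norm_nonneg _) (hM 0 ⟨le_refl 0, hT.le⟩)
  -- integrability of base
  have hbase : IntegrableOn (fun s => (t - s) ^ (-α)) (Ioc 0 t) := by
    have h1 : IntervalIntegrable (fun x : ℝ => x ^ (-α)) volume 0 t :=
      intervalIntegral.intervalIntegrable_rpow' (by linarith)
    have h2 := h1.comp_sub_left t
    simp only [sub_zero, sub_self] at h2
    exact (intervalIntegrable_iff_integrableOn_Ioc_of_le ht0.le).mp h2.symm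
  have hprod : ∀ F : ℝ → ℝ, ContinuousOn F K →
      IntegrableOn (fun s => (t - s) ^ (-α) * F s) (Ioc 0 t) := by
    intro F hF
    obtain ⟨C, hC⟩ := isCompact_Icc.exists_bound_of_continuousOn hF
    have := hbase.bdd_mul (c := C)
      ((hF.mono hIocK).aestronglyMeasurable measurableSet_Ioc)
      (by filter_upwards [ae_restrict_mem measurableSet_Ioc] with x hx
          exact hC x (hIocK hx))
    exact this.congr (Filter.Eventually.of_forall fun x => mul_comm _ _)
  -- vector integrand integrability
  have hvec : IntegrableOn (fun s => (t - s) ^ (-α) • dv s) (Ioc 0 t) := by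
    apply Integrable.mono' ((hbase.const_mul M).congr
      (Filter.Eventually.of_forall fun x => mul_comm _ _))
    · exact (hbase.aestronglyMeasurable).smul
        ((hdvc.mono hIocK).aestronglyMeasurable measurableSet_Ioc)
    · filter_upwards [ae_restrict_mem measurableSet_Ioc] with x hx
      have hx0 : (0:ℝ) ≤ t - x := by linarith [hx.2]
      rw [norm_smul, Real.norm_eq_abs, abs_of_nonneg (Real.rpow_nonneg hx0 _)]
      calc (t - x) ^ (-α) * ‖dv x‖ ≤ (t - x) ^ (-α) * M :=
            mul_le_mul_of_nonneg_left (hM x (hIocK hx)) (Real.rpow_nonneg hx0 _)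
        _ = (t - x) ^ (-α) * M := rfl
  -- a.e. equality of deriv v and dv on Ioc 0 t
  have hres : volume.restrict (Ioo (0:ℝ) t) = volume.restrict (Ioc 0 t) :=
    Measure.restrict_congr_set Ioo_ae_eq_Ioc
  have hae : (fun s => deriv v s) =ᵐ[volume.restrict (Ioc 0 t)] dv := by
    rw [← hres]
    filter_upwards [ae_restrict_mem measurableSet_Ioo] with s hs
    exact ((hderiv s (hIooT hs))).deriv
  -- scalar derivative a.e.
  have hsc : ∀ s ∈ Ioo (0:ℝ) T, HasDerivAt (fun s => ‖v s‖ ^ 2) (2 * ⟪v s, dv s⟫) s := by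
    intro s hs
    have h := (hderiv s hs).inner (𝕜 := ℝ) (hderiv s hs)
    have heq : (fun u => ⟪v u, v u⟫) = fun u => ‖v u‖ ^ 2 := by
      funext u; rw [real_inner_self_eq_norm_sq]
    rw [heq] at h
    refine h.congr_deriv ?_
    rw [real_inner_comm (dv s) (v s)]
    ring
  have haesc : (fun s => (t - s) ^ (-α) * deriv (fun u => ‖v u‖ ^ 2) s)
      =ᵐ[volume.restrict (Ioc 0 t)]
      (fun s => (t - s) ^ (-α) * (2 * ⟪v s, dv s⟫)) := by
    rw [← hres]
    filter_upwards [ae_restrict_mem measurableSet_Ioo] with s hs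
    rw [(hsc s (hIooT hs)).deriv]
  -- rewrite both sides
  have hc0 : (0:ℝ) < (Real.Gamma (1 - α))⁻¹ :=
    inv_pos.mpr (Real.Gamma_pos_of_pos (by linarith))
  rw [intervalIntegral.integral_of_le ht0.le, intervalIntegral.integral_of_le ht0.le]
  rw [MeasureTheory.integral_congr_ae haesc]
  have hveq : ∫ s in Ioc (0:ℝ) t, (t - s) ^ (-α) • deriv v s =
      ∫ s in Ioc (0:ℝ) t, (t - s) ^ (-α) • dv s := by
    apply MeasureTheory.integral_congr_ae
    filter_upwards [hae] with s hs
    rw [hs]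
  rw [hveq, real_inner_smul_right, ← integral_inner hvec (v t)]
  have hinner : ∫ s in Ioc (0:ℝ) t, ⟪v t, (t - s) ^ (-α) • dv s⟫ =
      ∫ s in Ioc (0:ℝ) t, (t - s) ^ (-α) * ⟪v t, dv s⟫ := by
    apply MeasureTheory.integral_congr_ae
    exact Filter.Eventually.of_forall fun s => real_inner_smul_right _ _ _
  rw [hinner]
  have h2eq : ∫ s in Ioc (0:ℝ) t, (t - s) ^ (-α) * (2 * ⟪v s, dv s⟫) =
      2 * ∫ s in Ioc (0:ℝ) t, (t - s) ^ (-α) * ⟪v s, dv s⟫ := by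
    rw [← MeasureTheory.integral_const_mul]
    apply MeasureTheory.integral_congr_ae
    exact Filter.Eventually.of_forall fun s => by ring
  rw [h2eq]
  -- reduce to nonnegativity of the difference integral
  have hA : IntegrableOn (fun s => (t - s) ^ (-α) * ⟪v t, dv s⟫) (Ioc 0 t) :=
    hprod _ (continuousOn_const.inner hdvc)
  have hB : IntegrableOn (fun s => (t - s) ^ (-α) * ⟪v s, dv s⟫) (Ioc 0 t) :=
    hprod _ (hvc.inner hdvc)
  have hkey : 0 ≤ ∫ s in Ioc (0:ℝ) t, (t - s) ^ (-α) * ⟪v t - v s, dv s⟫ := by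
    have hK1 : (∫ s in (0:ℝ)..t, (t - s) ^ (-α) * (-2 * ⟪v t - v s, dv s⟫)) ≤ 0 := by
      apply caputo_key_aux hα0 hα1 ht0 (w := fun s => ‖v t - v s‖ ^ 2)
      · exact ((continuousOn_const.sub (hvc.mono hIccK)).norm.pow 2)
      · exact continuousOn_const.mul ((continuousOn_const.sub (hvc.mono hIccK)).inner
          (hdvc.mono hIccK))
      · intro s hs
        have hd := hderiv s (hIooT hs)
        have h1 : HasDerivAt (fun u => v t - v u) (-dv s) s := hd.const_sub (v t)
        have h2 := h1.inner (𝕜 := ℝ) h1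
        have heq : (fun u => ⟪v t - v u, v t - v u⟫) = fun u => ‖v t - v u‖ ^ 2 := by
          funext u; rw [real_inner_self_eq_norm_sq]
        rw [heq] at h2
        refine h2.congr_deriv ?_
        simp only [inner_neg_right, inner_neg_left, real_inner_comm (dv s) (v t - v s)]
        ring
      · intro s _; positivity
      · simp
    rw [intervalIntegral.integral_of_le ht0.le] at hK1
    have h3 : ∫ s in Ioc (0:ℝ) t, (t - s) ^ (-α) * (-2 * ⟪v t - v s, dv s⟫) =
        -2 * ∫ s in Ioc (0:ℝ) t, (t - s) ^ (-α) * ⟪v t - v s, dv s⟫ := by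
      rw [← MeasureTheory.integral_const_mul]
      apply MeasureTheory.integral_congr_ae
      exact Filter.Eventually.of_forall fun s => by ring
    rw [h3] at hK1
    linarith
  have hdiff : ∫ s in Ioc (0:ℝ) t, (t - s) ^ (-α) * ⟪v t - v s, dv s⟫ =
      (∫ s in Ioc (0:ℝ) t, (t - s) ^ (-α) * ⟪v t, dv s⟫) -
      ∫ s in Ioc (0:ℝ) t, (t - s) ^ (-α) * ⟪v s, dv s⟫ := by
    rw [← integral_sub hA hB]
    apply MeasureTheory.integral_congr_ae
    apply Filter.Eventually.of_forall
    intro s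
    simp only [inner_sub_left]
    ring
  rw [hdiff] at hkey
  have hfin : (∫ s in Ioc (0:ℝ) t, (t - s) ^ (-α) * ⟪v s, dv s⟫) ≤
      ∫ s in Ioc (0:ℝ) t, (t - s) ^ (-α) * ⟪v t, dv s⟫ := by linarith
  have := mul_le_mul_of_nonneg_left hfin hc0.le
  rw [ge_iff_le]
  calc (1:ℝ)/2 * ((Real.Gamma (1 - α))⁻¹ *
        (2 * ∫ s in Ioc (0:ℝ) t, (t - s) ^ (-α) * ⟪v s, dv s⟫)) =
      (Real.Gamma (1 - α))⁻¹ * ∫ s in Ioc (0:ℝ) t, (t - s) ^ (-α) * ⟪v s, dv s⟫ := by ring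
    _ ≤ (Real.Gamma (1 - α))⁻¹ * ∫ s in Ioc (0:ℝ) t, (t - s) ^ (-α) * ⟪v t, dv s⟫ := this

end Aux

/-- For `α ∈ (0,1)`, a real Hilbert space `H` and a continuously differentiable
`v : [0,T] → H`, one has `(v(t), D_t^α v(t))_H ≥ (1/2) D_t^α |v(t)|_H²`
for all `t ∈ (0,T]`. -/
theorem inner_caputoDeriv_ge {H : Type*} [NormedAddCommGroup H] [InnerProductSpace ℝ H]
    [CompleteSpace H]
    (α T : ℝ) (hα : α ∈ Set.Ioo (0:ℝ) 1) (hT : 0 < T)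
    (v : ℝ → H) (hv : ContDiffOn ℝ 1 v (Set.Icc 0 T)) (t : ℝ) (ht : t ∈ Set.Ioc 0 T) :
    ⟪v t, caputoDerivVec α v t⟫ ≥ (1 / 2) * caputoDeriv α (fun s => ‖v s‖ ^ 2) t := by
  unfold caputoDerivVec caputoDeriv
  exact inner_caputoDeriv_ge' α T hα hT v hv t ht
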